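/- For every integer n ≥ 1 and real numbers ρ > 0 and γ ≥ 0, one has Σ_{m=0}^∞ γ^m · Σ_{k=0}^{n-1} 1/(k+ρ)_{m+1} = Σ_{k=0}^{n-1} 1/(k+ρ) + Σ_{m=1}^∞ (γ^m / m) · ( 1/(ρ)_m − 1/(n+ρ)_m ), and both series converge. -/

import Mathlib

open scoped BigOperators

/-- The real Pochhammer symbol `(a)_m = a (a+1) ⋯ (a+m-1)`. -/
noncomputable def pochR (a : ℝ) (m : ℕ) : ℝ := (ascPochhammer ℝ m).eval a

lemma pochR_zero (a : ℝ) : pochR a 0 = 1 := by simp [pochR]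

lemma pochR_one (a : ℝ) : pochR a 1 = a := by simp [pochR]

lemma pochR_succ (a : ℝ) (m : ℕ) : pochR a (m + 1) = pochR a m * (a + m) :=
  ascPochhammer_succ_eval m a

lemma pochR_succ_left (a : ℝ) (m : ℕ) : pochR a (m + 1) = a * pochR (a + 1) m := by
  simp [pochR, ascPochhammer_succ_left, Polynomial.eval_comp]

lemma pochR_pos {a : ℝ} (ha : 0 < a) (m : ℕ) : 0 < pochR a m := by
  induction m with
  | zero => simp [pochR_zero]
  | succ m ih => rw [pochR_succ]; positivity

lemma diff_eq {a : ℝ} (ha : 0 < a) (m : ℕ) :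
    1 / pochR a m - 1 / pochR (a + 1) m = m / pochR a (m + 1) := by
  have h1 : pochR a (m + 1) = pochR a m * (a + m) := pochR_succ a m
  have h2 : pochR a (m + 1) = a * pochR (a + 1) m := pochR_succ_left a m
  have p1 := pochR_pos ha m
  have p2 := pochR_pos (by linarith : (0:ℝ) < a + 1) m
  have hE : a * pochR (a + 1) m = pochR a m * (a + m) := h2.symm.trans h1
  rw [div_sub_div _ _ p1.ne' p2.ne', h2]
  rw [div_eq_div_iff (by positivity) (by positivity)]
  linear_combination pochR (a + 1) m * hE

lemma key (n : ℕ) (ρ : ℝ) (hρ : 0 < ρ) (m : ℕ) :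
    (m : ℝ) * ∑ k ∈ Finset.range n, 1 / pochR ((k : ℝ) + ρ) (m + 1) =
      1 / pochR ρ m - 1 / pochR ((n : ℝ) + ρ) m := by
  rw [Finset.mul_sum]
  have : ∀ k ∈ Finset.range n, (m : ℝ) * (1 / pochR ((k : ℝ) + ρ) (m + 1)) =
      (fun k : ℕ => 1 / pochR ((k : ℝ) + ρ) m) k
        - (fun k : ℕ => 1 / pochR ((k : ℝ) + ρ) m) (k + 1) := by
    intro k _
    have hk : (0:ℝ) < (k : ℝ) + ρ := by positivity
    have := diff_eq hk m
    simp only [Nat.cast_add, Nat.cast_one]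
    rw [show ((k:ℝ) + 1 + ρ) = (k:ℝ) + ρ + 1 by ring, this]
    rw [mul_one_div]
  rw [Finset.sum_congr rfl this, Finset.sum_range_sub']
  simp

/-- Series rearrangement from the proof of Corollary 2: for `n ≥ 1`, `ρ > 0`, `γ ≥ 0`,
`Σ_{m=0}^∞ γ^m Σ_{k=0}^{n-1} 1/(k+ρ)_{m+1}
  = Σ_{k=0}^{n-1} 1/(k+ρ) + Σ_{m=1}^∞ (γ^m/m)(1/(ρ)_m − 1/(n+ρ)_m)`,
and both series converge. -/
theorem pangenome_series_rearrangement
    (n : ℕ) (hn : 1 ≤ n) (ρ γ : ℝ) (hρ : 0 < ρ) (hγ : 0 ≤ γ) :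
    Summable (fun m : ℕ =>
      γ ^ m * ∑ k ∈ Finset.range n, 1 / pochR ((k : ℝ) + ρ) (m + 1)) ∧
    Summable (fun m : ℕ =>
      γ ^ (m + 1) / (m + 1) *
        (1 / pochR ρ (m + 1) - 1 / pochR ((n : ℝ) + ρ) (m + 1))) ∧
    ∑' m : ℕ, γ ^ m * ∑ k ∈ Finset.range n, 1 / pochR ((k : ℝ) + ρ) (m + 1) =
      ∑ k ∈ Finset.range n, 1 / ((k : ℝ) + ρ) +
        ∑' m : ℕ,
          γ ^ (m + 1) / (m + 1) *
            (1 / pochR ρ (m + 1) - 1 / pochR ((n : ℝ) + ρ) (m + 1)) := by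
  set f : ℕ → ℝ := fun m => γ ^ m * ∑ k ∈ Finset.range n, 1 / pochR ((k : ℝ) + ρ) (m + 1)
    with hf
  have hfpos : ∀ m, 0 ≤ f m := by
    intro m
    apply mul_nonneg (by positivity)
    exact Finset.sum_nonneg fun k _ =>
      div_nonneg zero_le_one (pochR_pos (by positivity) _).le
  -- summability of f
  have Hsum : Summable f := by
    apply summable_of_ratio_norm_eventually_le (r := 1/2) (by norm_num)
    filter_upwards [Filter.eventually_ge_atTop ⌈2 * γ⌉₊] with m hm
    rw [Real.norm_eq_abs, Real.norm_eq_abs, abs_of_nonneg (hfpos _), abs_of_nonneg (hfpos _)]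
    have hmγ : 2 * γ ≤ (m : ℝ) := le_trans (Nat.le_ceil _) (by exact_mod_cast hm)
    have hstep : ∀ k ∈ Finset.range n,
        γ * (1 / pochR ((k : ℝ) + ρ) (m + 2)) ≤ (1/2) * (1 / pochR ((k : ℝ) + ρ) (m + 1)) := by
      intro k _
      have hk : (0:ℝ) < (k : ℝ) + ρ := by positivity
      have p1 := pochR_pos hk (m + 1)
      have hk0 : (0:ℝ) ≤ (k : ℝ) := Nat.cast_nonneg k
      rw [pochR_succ, mul_one_div, mul_one_div, div_div]
      push_cast
      have hd : (0:ℝ) < (k : ℝ) + ρ + ((m : ℝ) + 1) := by positivity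
      have h2γ : 2 * γ ≤ (k : ℝ) + ρ + ((m : ℝ) + 1) := by linarith
      rw [div_le_div_iff₀ (mul_pos p1 hd) (mul_pos two_pos p1)]
      nlinarith [mul_le_mul_of_nonneg_left h2γ p1.le]
    calc f (m + 1) = γ ^ m * ∑ k ∈ Finset.range n, γ * (1 / pochR ((k : ℝ) + ρ) (m + 2)) := by
          rw [hf]
          simp only [Finset.mul_sum]
          exact Finset.sum_congr rfl fun k _ => by rw [pow_succ]; ring_nf
      _ ≤ γ ^ m * ∑ k ∈ Finset.range n, (1/2) * (1 / pochR ((k : ℝ) + ρ) (m + 1)) := by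
          exact mul_le_mul_of_nonneg_left (Finset.sum_le_sum hstep) (by positivity)
      _ = 1/2 * f m := by rw [hf, ← Finset.mul_sum]; ring
  have Hsum' : Summable (fun m => f (m + 1)) := (summable_nat_add_iff 1).mpr Hsum
  have hfg : ∀ m : ℕ, f (m + 1) =
      γ ^ (m + 1) / (m + 1) * (1 / pochR ρ (m + 1) - 1 / pochR ((n : ℝ) + ρ) (m + 1)) := by
    intro m
    have hk := key n ρ hρ (m + 1)
    have hm1 : ((m : ℝ) + 1) ≠ 0 := by positivity
    rw [hf]
    push_cast at hk ⊢
    rw [← hk]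
    field_simp
  have hf0 : f 0 = ∑ k ∈ Finset.range n, 1 / ((k : ℝ) + ρ) := by
    rw [hf]; simp [pochR_one]
  refine ⟨Hsum, ?_, ?_⟩
  · exact Hsum'.congr fun m => (hfg m)
  · rw [Summable.tsum_eq_zero_add Hsum, hf0]
    congr 1
    exact tsum_congr hfg
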